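/- Let μ, λ ∈ ℝ. If μλ − μ − λ > 0, then Δ(μ,λ;z) → +∞ as z → 2 from the right; if μλ − μ − λ < 0, then Δ(μ,λ;z) → −∞ as z → 2 from the right; and if μλ − μ − λ = 0, then Δ(μ,λ;z) → 1 − μ as z → 2 from the right (so this limit is negative when μ > 1 and positive when μ < 1). -/

import Mathlib

open MeasureTheory Real Filter Topology Asymptotics

/-- `a(z) = (1/2π)∫_{−π}^{π} dq/(z − 1 + cos q)`. -/
noncomputable def aF (z : ℝ) : ℝ :=
  (2 * Real.pi)⁻¹ * ∫ q in (-Real.pi)..Real.pi, (z - 1 + Real.cos q)⁻¹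

/-- `b(z) = −(1/2π)∫_{−π}^{π} cos q dq/(z − 1 + cos q)`. -/
noncomputable def bF (z : ℝ) : ℝ :=
  -((2 * Real.pi)⁻¹ * ∫ q in (-Real.pi)..Real.pi, Real.cos q / (z - 1 + Real.cos q))

/-- `c(z) = (1/2π)∫_{−π}^{π} cos² q dq/(z − 1 + cos q)`. -/
noncomputable def cF (z : ℝ) : ℝ :=
  (2 * Real.pi)⁻¹ * ∫ q in (-Real.pi)..Real.pi, (Real.cos q) ^ 2 / (z - 1 + Real.cos q)

/-- The Fredholm determinant `Δ(μ,λ;z) = (1 − μ a(z))(1 − λ c(z)) − μλ b(z)²`. -/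
noncomputable def Δdet (μ lam z : ℝ) : ℝ :=
  (1 - μ * aF z) * (1 - lam * cF z) - μ * lam * (bF z) ^ 2

/-! ### Auxiliary lemmas -/

lemma denom_pos {z : ℝ} (hz : 2 < z) (q : ℝ) : 0 < z - 1 + Real.cos q := by
  have h := Real.neg_one_le_cos q; linarith

lemma cont_inv {z : ℝ} (hz : 2 < z) : Continuous fun q => (z - 1 + Real.cos q)⁻¹ :=
  (continuous_const.add Real.continuous_cos).inv₀ fun q => (denom_pos hz q).ne'

lemma bF_eq {z : ℝ} (hz : 2 < z) : bF z = (z - 1) * aF z - 1 := by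
  have h1 : ∀ q : ℝ, Real.cos q / (z - 1 + Real.cos q)
      = 1 - (z - 1) * (z - 1 + Real.cos q)⁻¹ := by
    intro q
    have h := (denom_pos hz q).ne'
    field_simp
    ring
  have hInt : IntervalIntegrable (fun q => (z - 1 + Real.cos q)⁻¹) volume (-π) π :=
    (cont_inv hz).intervalIntegrable _ _
  rw [bF, aF]
  simp_rw [h1]
  rw [intervalIntegral.integral_sub intervalIntegrable_const (hInt.const_mul _),
    intervalIntegral.integral_const, intervalIntegral.integral_const_mul]
  have hπ := Real.pi_ne_zero
  simp only [smul_eq_mul, mul_one]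
  field_simp
  ring

lemma cF_eq {z : ℝ} (hz : 2 < z) : cF z = (z - 1) ^ 2 * aF z - (z - 1) := by
  have h1 : ∀ q : ℝ, (Real.cos q) ^ 2 / (z - 1 + Real.cos q)
      = (Real.cos q - (z - 1)) + (z - 1) ^ 2 * (z - 1 + Real.cos q)⁻¹ := by
    intro q
    have h := (denom_pos hz q).ne'
    field_simp
    ring
  have hInt : IntervalIntegrable (fun q => (z - 1 + Real.cos q)⁻¹) volume (-π) π :=
    (cont_inv hz).intervalIntegrable _ _
  have hIntc : IntervalIntegrable (fun q => Real.cos q - (z - 1)) volume (-π) π :=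
    (Real.continuous_cos.sub continuous_const).intervalIntegrable _ _
  rw [cF, aF]
  simp_rw [h1]
  rw [intervalIntegral.integral_add hIntc (hInt.const_mul _),
    intervalIntegral.integral_sub (Real.continuous_cos.intervalIntegrable _ _)
      intervalIntegrable_const,
    integral_cos, intervalIntegral.integral_const, intervalIntegral.integral_const_mul]
  have hπ := Real.pi_ne_zero
  simp only [smul_eq_mul, Real.sin_pi, Real.sin_neg, neg_zero, sub_zero, zero_sub]
  field_simp
  ring

lemma aF_sym {z : ℝ} (hz : 2 < z) :
    aF z = π⁻¹ * ∫ u in (0:ℝ)..π, (z - 2 + (1 - Real.cos u))⁻¹ := by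
  have hI1 : IntervalIntegrable (fun q => (z - 1 + Real.cos q)⁻¹) volume (-π) 0 :=
    (cont_inv hz).intervalIntegrable _ _
  have hI2 : IntervalIntegrable (fun q => (z - 1 + Real.cos q)⁻¹) volume 0 π :=
    (cont_inv hz).intervalIntegrable _ _
  have h2 : (∫ q in (-π)..(0:ℝ), (z - 1 + Real.cos q)⁻¹)
      = ∫ q in (0:ℝ)..π, (z - 1 + Real.cos q)⁻¹ := by
    have := intervalIntegral.integral_comp_neg (a := (0:ℝ)) (b := π)
      (fun q => (z - 1 + Real.cos q)⁻¹)
    simp only [Real.cos_neg, neg_zero] at this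
    exact this.symm
  have h3 : (∫ u in (0:ℝ)..π, (z - 2 + (1 - Real.cos u))⁻¹)
      = ∫ q in (0:ℝ)..π, (z - 1 + Real.cos q)⁻¹ := by
    have := intervalIntegral.integral_comp_sub_left (a := (0:ℝ)) (b := π)
      (fun q => (z - 1 + Real.cos q)⁻¹) π
    simp only [Real.cos_pi_sub, sub_self, sub_zero] at this
    rw [show (fun u : ℝ => (z - 2 + (1 - Real.cos u))⁻¹)
      = fun u : ℝ => (z - 1 + -Real.cos u)⁻¹ from funext fun u => by ring_nf]
    exact this
  rw [aF, ← intervalIntegral.integral_add_adjacent_intervals hI1 hI2, h2, h3]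
  have hπ := Real.pi_ne_zero
  field_simp
  ring

lemma integral_inv_quad (e s T : ℝ) (he : 0 < e) (hs : 0 < s) :
    ∫ u in (0:ℝ)..T, (e * (1 + (s * u) ^ 2))⁻¹ = (e * s)⁻¹ * Real.arctan (s * T) := by
  have hderiv : ∀ u : ℝ, HasDerivAt (fun u => (e * s)⁻¹ * Real.arctan (s * u))
      ((e * (1 + (s * u) ^ 2))⁻¹) u := by
    intro u
    have h1 : HasDerivAt (fun u : ℝ => s * u) s u := by
      simpa using (hasDerivAt_id u).const_mul s
    have h3 := (h1.arctan).const_mul (e * s)⁻¹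
    refine h3.congr_deriv ?_
    have hpos : (0:ℝ) < 1 + (s * u) ^ 2 := by positivity
    field_simp
  have hcont : Continuous fun u : ℝ => (e * (1 + (s * u) ^ 2))⁻¹ :=
    Continuous.inv₀ (by continuity) (fun u => by positivity)
  rw [intervalIntegral.integral_eq_sub_of_hasDerivAt (fun u _ => hderiv u)
    (hcont.intervalIntegrable _ _)]
  simp [mul_comm]

/-- `e * √(c/e²) = √c` for `e > 0`, `c ≥ 0`. -/
lemma esqrt_gen {e c : ℝ} (he : 0 < e) (hc : 0 ≤ c) :
    e * Real.sqrt (c / e ^ 2) = Real.sqrt c := by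
  rw [show c / e ^ 2 = c * (e⁻¹) ^ 2 by field_simp,
    Real.sqrt_mul hc, Real.sqrt_sq (by positivity)]
  field_simp

lemma one_sub_cos_le {u : ℝ} (hu0 : 0 ≤ u) (huπ : u ≤ π) : 1 - Real.cos u ≤ u ^ 2 / 2 := by
  have hπ := Real.pi_pos
  have h1 : Real.sin (u / 2) ≤ u / 2 := Real.sin_le (by linarith)
  have h2 : 0 ≤ Real.sin (u / 2) :=
    Real.sin_nonneg_of_nonneg_of_le_pi (by linarith) (by linarith)
  have hc := Real.cos_two_mul (u / 2)
  rw [show 2 * (u / 2) = u by ring] at hc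
  have hp := Real.sin_sq_add_cos_sq (u / 2)
  nlinarith

lemma le_one_sub_cos {u : ℝ} (hu0 : 0 ≤ u) (huπ : u ≤ π) :
    2 / π ^ 2 * u ^ 2 ≤ 1 - Real.cos u := by
  have h1 : 2 / π * (u / 2) ≤ Real.sin (u / 2) :=
    Real.mul_le_sin (by linarith) (by linarith)
  have h1' : u / π ≤ Real.sin (u / 2) := by
    calc u / π = 2 / π * (u / 2) := by ring
      _ ≤ _ := h1
  have hπ := Real.pi_pos
  have hnn : 0 ≤ u / π := by positivity
  have hsq : (u / π) ^ 2 ≤ Real.sin (u / 2) ^ 2 := by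
    apply pow_le_pow_left₀ hnn h1'
  have hc := Real.cos_two_mul (u / 2)
  rw [show 2 * (u / 2) = u by ring] at hc
  have hp := Real.sin_sq_add_cos_sq (u / 2)
  have hup : 2 / π ^ 2 * u ^ 2 = 2 * (u / π) ^ 2 := by
    rw [div_pow]; ring
  linarith

lemma aF_nonneg {z : ℝ} (hz : 2 < z) : 0 ≤ aF z := by
  rw [aF]
  apply mul_nonneg (by positivity)
  apply intervalIntegral.integral_nonneg (by linarith [Real.pi_pos])
  intro q _
  exact inv_nonneg.2 (denom_pos hz q).le

lemma cont1 {e : ℝ} (he : 0 < e) : Continuous fun u : ℝ => (e + (1 - Real.cos u))⁻¹ := by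
  apply Continuous.inv₀
  · exact continuous_const.add (continuous_const.sub Real.continuous_cos)
  · intro u
    have h := Real.cos_le_one u
    have h2 : 0 < e + (1 - Real.cos u) := by linarith
    exact h2.ne'

lemma cont2 {e : ℝ} (s : ℝ) (he : 0 < e) :
    Continuous fun u : ℝ => (e * (1 + (s * u) ^ 2))⁻¹ := by
  apply Continuous.inv₀
  · exact continuous_const.mul
      (continuous_const.add ((continuous_const.mul continuous_id).pow 2))
  · intro u
    have h2 : (0:ℝ) < 1 + (s * u) ^ 2 := by positivity
    exact (mul_pos he h2).ne'

lemma a_upper {z : ℝ} (hz : 2 < z) : aF z ≤ π * (Real.sqrt (2 * (z - 2)))⁻¹ := by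
  have hπ := Real.pi_pos
  set e := z - 2 with he'
  have he : 0 < e := by rw [he']; linarith
  set s := Real.sqrt ((2 * e / π ^ 2) / e ^ 2) with hs'
  have hs : 0 < s := Real.sqrt_pos.2 (by positivity)
  have hes : e * s = Real.sqrt (2 * e) / π := by
    rw [hs', esqrt_gen he (by positivity),
      show 2 * e / π ^ 2 = (2 * e) * (π⁻¹) ^ 2 by field_simp,
      Real.sqrt_mul (by positivity), Real.sqrt_sq (by positivity)]
    field_simp
  have hes2 : e * s ^ 2 = 2 / π ^ 2 := by
    have h2 : s ^ 2 = (2 * e / π ^ 2) / e ^ 2 := Real.sq_sqrt (by positivity)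
    rw [h2]; field_simp
  have hpt : ∀ u ∈ Set.Icc (0:ℝ) π,
      (e + (1 - Real.cos u))⁻¹ ≤ (e * (1 + (s * u) ^ 2))⁻¹ := by
    intro u hu
    have hco := le_one_sub_cos hu.1 hu.2
    have hkey : e * (1 + (s * u) ^ 2) = e + e * s ^ 2 * u ^ 2 := by ring
    have : e * (1 + (s * u) ^ 2) ≤ e + (1 - Real.cos u) := by
      rw [hkey, hes2]; linarith
    exact inv_anti₀ (by positivity) this
  have hIle : (∫ u in (0:ℝ)..π, (e + (1 - Real.cos u))⁻¹)
      ≤ ∫ u in (0:ℝ)..π, (e * (1 + (s * u) ^ 2))⁻¹ := by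
    apply intervalIntegral.integral_mono_on hπ.le
      ((cont1 he).intervalIntegrable _ _) ((cont2 s he).intervalIntegrable _ _) hpt
  have hval := integral_inv_quad e s π he hs
  have harct : Real.arctan (s * π) ≤ π / 2 := (Real.arctan_lt_pi_div_two _).le
  have hesinv : (0:ℝ) < (e * s)⁻¹ := by positivity
  have haz : aF z = π⁻¹ * ∫ u in (0:ℝ)..π, (e + (1 - Real.cos u))⁻¹ := by
    rw [aF_sym hz]
  calc aF z = π⁻¹ * ∫ u in (0:ℝ)..π, (e + (1 - Real.cos u))⁻¹ := haz
    _ ≤ π⁻¹ * ∫ u in (0:ℝ)..π, (e * (1 + (s * u) ^ 2))⁻¹ := by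
        apply mul_le_mul_of_nonneg_left hIle (by positivity)
    _ = π⁻¹ * ((e * s)⁻¹ * Real.arctan (s * π)) := by rw [hval]
    _ ≤ π⁻¹ * ((e * s)⁻¹ * (π / 2)) := by
        apply mul_le_mul_of_nonneg_left _ (by positivity)
        exact mul_le_mul_of_nonneg_left harct hesinv.le
    _ ≤ π * (Real.sqrt (2 * e))⁻¹ := by
        rw [hes]
        have hsq : 0 < Real.sqrt (2 * e) := Real.sqrt_pos.2 (by positivity)
        have hsq' : Real.sqrt (2 * e) ≠ 0 := hsq.ne'
        have hπ' : (π:ℝ) ≠ 0 := Real.pi_ne_zero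
        have heq : π⁻¹ * ((Real.sqrt (2 * e) / π)⁻¹ * (π / 2))
            = (π / 2) * (Real.sqrt (2 * e))⁻¹ := by
          rw [inv_div]
          field_simp
        rw [heq]
        apply mul_le_mul_of_nonneg_right (by linarith) (by positivity)

lemma a_lower {z : ℝ} (hz : 2 < z) :
    π⁻¹ * ((Real.sqrt ((z - 2) / 2))⁻¹ * Real.arctan ((Real.sqrt (2 * (z - 2)))⁻¹ * π))
      ≤ aF z := by
  have hπ := Real.pi_pos
  set e := z - 2 with he'
  have he : 0 < e := by rw [he']; linarith
  set t := Real.sqrt ((e / 2) / e ^ 2) with ht'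
  have ht : 0 < t := Real.sqrt_pos.2 (by positivity)
  have het : e * t = Real.sqrt (e / 2) := by rw [ht', esqrt_gen he (by positivity)]
  have htinv : t = (Real.sqrt (2 * e))⁻¹ := by
    rw [ht', show (e / 2) / e ^ 2 = (2 * e)⁻¹ by field_simp, Real.sqrt_inv]
  have het2 : e * t ^ 2 = 1 / 2 := by
    have h2 : t ^ 2 = (e / 2) / e ^ 2 := Real.sq_sqrt (by positivity)
    rw [h2]; field_simp
  have hpt : ∀ u ∈ Set.Icc (0:ℝ) π,
      (e * (1 + (t * u) ^ 2))⁻¹ ≤ (e + (1 - Real.cos u))⁻¹ := by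
    intro u hu
    have hco := one_sub_cos_le hu.1 hu.2
    have hkey : e * (1 + (t * u) ^ 2) = e + e * t ^ 2 * u ^ 2 := by ring
    have h1c : 0 < e + (1 - Real.cos u) := by
      have := Real.cos_le_one u; linarith
    apply inv_anti₀ h1c
    rw [hkey, het2]; linarith
  have hIle : (∫ u in (0:ℝ)..π, (e * (1 + (t * u) ^ 2))⁻¹)
      ≤ ∫ u in (0:ℝ)..π, (e + (1 - Real.cos u))⁻¹ := by
    apply intervalIntegral.integral_mono_on hπ.le
      ((cont2 t he).intervalIntegrable _ _) ((cont1 he).intervalIntegrable _ _) hpt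
  have hval := integral_inv_quad e t π he ht
  rw [aF_sym hz]
  have : (Real.sqrt ((z - 2) / 2))⁻¹ * Real.arctan ((Real.sqrt (2 * (z - 2)))⁻¹ * π)
      = (e * t)⁻¹ * Real.arctan (t * π) := by
    rw [het, htinv, he']
  rw [this, ← hval]
  exact mul_le_mul_of_nonneg_left hIle (by positivity)

lemma sub_two_tendsto : Tendsto (fun z : ℝ => z - 2) (𝓝[>] (2:ℝ)) (𝓝[>] (0:ℝ)) := by
  apply tendsto_nhdsWithin_of_tendsto_nhds_of_eventually_within
  · have : Tendsto (fun z : ℝ => z - 2) (𝓝 (2:ℝ)) (𝓝 (0:ℝ)) := by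
      have := (continuous_id.sub (continuous_const (y := (2:ℝ)))).tendsto 2
      simpa [Pi.sub_def] using this
    exact this.mono_left nhdsWithin_le_nhds
  · filter_upwards [self_mem_nhdsWithin] with z hz
    simpa [Set.mem_Ioi] using (by simpa [Set.mem_Ioi] using hz : (2:ℝ) < z)

lemma sqrt_comp_tendsto (c : ℝ) (hc : 0 < c) :
    Tendsto (fun z : ℝ => Real.sqrt (c * (z - 2))) (𝓝[>] (2:ℝ)) (𝓝[>] (0:ℝ)) := by
  apply tendsto_nhdsWithin_of_tendsto_nhds_of_eventually_within
  · have hcont : Tendsto (fun z : ℝ => Real.sqrt (c * (z - 2))) (𝓝 (2:ℝ))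
        (𝓝 (Real.sqrt (c * (2 - 2)))) :=
      (Real.continuous_sqrt.comp ((continuous_const.mul
        (continuous_id.sub continuous_const)))).tendsto 2
    simpa using hcont.mono_left nhdsWithin_le_nhds
  · filter_upwards [self_mem_nhdsWithin] with z hz
    have : (2:ℝ) < z := hz
    exact Real.sqrt_pos.2 (by nlinarith)

lemma aF_tendsto_atTop : Tendsto (fun z => aF z) (𝓝[>] (2:ℝ)) atTop := by
  have hπ := Real.pi_pos
  have h1 : Tendsto (fun z : ℝ => (Real.sqrt ((z - 2) / 2))⁻¹) (𝓝[>] (2:ℝ)) atTop := by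
    have := (sqrt_comp_tendsto (1/2) (by norm_num))
    have h2 : Tendsto (fun z : ℝ => (Real.sqrt ((1/2) * (z - 2)))⁻¹) (𝓝[>] (2:ℝ)) atTop :=
      tendsto_inv_nhdsGT_zero.comp this
    convert h2 using 3 with z
    ring_nf
  have h2 : Tendsto (fun z : ℝ => Real.arctan ((Real.sqrt (2 * (z - 2)))⁻¹ * π))
      (𝓝[>] (2:ℝ)) (𝓝 (π / 2)) := by
    have hin : Tendsto (fun z : ℝ => (Real.sqrt (2 * (z - 2)))⁻¹ * π) (𝓝[>] (2:ℝ)) atTop :=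
      (tendsto_inv_nhdsGT_zero.comp (sqrt_comp_tendsto 2 (by norm_num))).atTop_mul_const hπ
    exact (Real.tendsto_arctan_atTop.mono_right nhdsWithin_le_nhds).comp hin
  have h3 : Tendsto (fun z : ℝ =>
      (Real.sqrt ((z - 2) / 2))⁻¹ * Real.arctan ((Real.sqrt (2 * (z - 2)))⁻¹ * π))
      (𝓝[>] (2:ℝ)) atTop :=
    Tendsto.atTop_mul_pos (by positivity) h1 h2
  have h4 := h3.const_mul_atTop (r := π⁻¹) (by positivity)
  apply tendsto_atTop_mono' _ _ h4
  filter_upwards [self_mem_nhdsWithin] with z hz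
  exact a_lower hz

lemma mul_aF_tendsto_zero :
    Tendsto (fun z => (z - 2) * aF z) (𝓝[>] (2:ℝ)) (𝓝 0) := by
  have hπ := Real.pi_pos
  apply squeeze_zero'
  · filter_upwards [self_mem_nhdsWithin] with z hz
    have h2z : (2:ℝ) < z := hz
    exact mul_nonneg (by linarith) (aF_nonneg h2z)
  · filter_upwards [self_mem_nhdsWithin] with z hz
    have h2z : (2:ℝ) < z := hz
    calc (z - 2) * aF z ≤ (z - 2) * (π * (Real.sqrt (2 * (z - 2)))⁻¹) :=
          mul_le_mul_of_nonneg_left (a_upper h2z) (by linarith)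
      _ = π * Real.sqrt ((z - 2) / 2) := by
          have he : (0:ℝ) < z - 2 := by linarith
          have h1 : (z - 2) * (Real.sqrt (2 * (z - 2)))⁻¹ = Real.sqrt ((z - 2) / 2) := by
            rw [show (Real.sqrt (2 * (z - 2)))⁻¹ = Real.sqrt ((2 * (z - 2))⁻¹) by
              rw [Real.sqrt_inv],
              show (2 * (z - 2))⁻¹ = ((z - 2) / 2) / (z - 2) ^ 2 by field_simp]
            exact esqrt_gen he (by positivity)
          rw [← h1]; ring
  · have : Tendsto (fun z : ℝ => π * Real.sqrt ((z - 2) / 2)) (𝓝 (2:ℝ)) (𝓝 0) := by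
      have hcont : Continuous fun z : ℝ => π * Real.sqrt ((z - 2) / 2) := by continuity
      have := hcont.tendsto 2
      simpa using this
    exact this.mono_left nhdsWithin_le_nhds

/-- If `μλ − μ − λ > 0` then `Δ(μ,λ;z) → +∞` as `z → 2⁺`; if `μλ − μ − λ < 0` then
`Δ(μ,λ;z) → −∞` as `z → 2⁺`; and if `μλ − μ − λ = 0` then `Δ(μ,λ;z) → 1 − μ` as
`z → 2⁺` (so this limit is negative when `μ > 1` and positive when `μ < 1`). -/
theorem det_limits_right_of_two (μ lam : ℝ) :
    (0 < μ * lam - μ - lam → Tendsto (fun z => Δdet μ lam z) (𝓝[>] (2:ℝ)) atTop) ∧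
    (μ * lam - μ - lam < 0 → Tendsto (fun z => Δdet μ lam z) (𝓝[>] (2:ℝ)) atBot) ∧
    (μ * lam - μ - lam = 0 → Tendsto (fun z => Δdet μ lam z) (𝓝[>] (2:ℝ)) (𝓝 (1 - μ))) ∧
    (1 < μ → 1 - μ < 0) ∧ (μ < 1 → 0 < 1 - μ) := by
  set G : ℝ → ℝ := fun z => lam * (z - 1) * (μ - (z - 1)) - μ with hG'
  set H : ℝ → ℝ := fun z => 1 - lam * (μ - (z - 1)) with hH'
  have hΔ : ∀ᶠ z in 𝓝[>] (2:ℝ), H z + aF z * G z = Δdet μ lam z := by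
    filter_upwards [self_mem_nhdsWithin] with z hz
    have h2z : (2:ℝ) < z := hz
    rw [Δdet, bF_eq h2z, cF_eq h2z, hG', hH']
    ring
  have hH : Tendsto H (𝓝[>] (2:ℝ)) (𝓝 (1 - lam * (μ - 1))) := by
    have hc : Continuous H := by
      rw [hH']
      exact continuous_const.sub (continuous_const.mul
        (continuous_const.sub (continuous_id.sub continuous_const)))
    have ht := hc.tendsto 2
    have h2 : H 2 = 1 - lam * (μ - 1) := by rw [hH']; norm_num
    rw [h2] at ht
    exact ht.mono_left nhdsWithin_le_nhds
  have hG : Tendsto G (𝓝[>] (2:ℝ)) (𝓝 (μ * lam - μ - lam)) := by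
    have hc : Continuous G := by
      rw [hG']
      exact ((continuous_const.mul (continuous_id.sub continuous_const)).mul
        (continuous_const.sub (continuous_id.sub continuous_const))).sub continuous_const
    have := hc.tendsto 2
    have h2 : G 2 = μ * lam - μ - lam := by rw [hG']; ring
    rw [h2] at this
    exact this.mono_left nhdsWithin_le_nhds
  refine ⟨?_, ?_, ?_, fun h => by linarith, fun h => by linarith⟩
  · intro hK
    have hfg := Tendsto.atTop_mul_pos hK aF_tendsto_atTop hG
    exact (hH.add_atTop hfg).congr' hΔ
  · intro hK
    have hfg := Tendsto.atTop_mul_neg hK aF_tendsto_atTop hG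
    exact (hH.add_atBot hfg).congr' hΔ
  · intro hK
    have hGeq : ∀ z : ℝ, G z = lam * (μ - z) * (z - 2) := by
      intro z; rw [hG']; linear_combination hK
    have h0 : Tendsto (fun z => aF z * G z) (𝓝[>] (2:ℝ)) (𝓝 0) := by
      have h1 : Tendsto (fun z : ℝ => lam * (μ - z)) (𝓝[>] (2:ℝ)) (𝓝 (lam * (μ - 2))) := by
        have hc : Continuous fun z : ℝ => lam * (μ - z) := by continuity
        exact (hc.tendsto 2).mono_left nhdsWithin_le_nhds
      have h2 := h1.mul mul_aF_tendsto_zero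
      rw [mul_zero] at h2
      apply h2.congr
      intro z
      rw [hGeq z]; ring
    have hsum := hH.add h0
    rw [add_zero] at hsum
    have hval : 1 - lam * (μ - 1) = 1 - μ := by linear_combination -hK
    rw [hval] at hsum
    exact hsum.congr' hΔ
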